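/- Let F be a free group on a set E, let G = F/γ₃(F) be its 2-nilpotent quotient, and let A = G^{ab} ≅ F^{ab} be the abelianization with quotient map p: G → A. Then: (i) the kernel of p equals γ₂(F)/γ₃(F) and is contained in the center of G; (ii) there is an isomorphism of abelian groups w: ⋀²A → ker p satisfying w(p(x) ∧ p(y)) = x⁻¹y⁻¹xy for all x, y ∈ G. In particular there is a central extension ⋀²A ↣ G ↠ A, and the commutator map induces a natural isomorphism ⋀²(F^{ab}) ≅ γ₂(F)/γ₃(F). -/

import Mathlib

noncomputable section

open scoped commutatorElement IsMulCommutative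

/-- the subgroup of relations of the exterior square of an abelian group. -/
def Lambda2Rels (A : Type) [AddCommGroup A] : AddSubgroup (TensorProduct ℤ A A) :=
  AddSubgroup.closure {x | ∃ a : A, x = a ⊗ₜ[ℤ] a}

/-- the exterior square `Λ²(A) = (A ⊗ A)/(a ⊗ a)` of an abelian group `A`. -/
def Lambda2 (A : Type) [AddCommGroup A] : Type := TensorProduct ℤ A A ⧸ Lambda2Rels A

instance (A : Type) [AddCommGroup A] : AddCommGroup (Lambda2 A) :=
  QuotientAddGroup.Quotient.addCommGroup _

/-- the class of `a ⊗ b` in the exterior square, i.e. `a ∧ b`. -/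
def Lambda2.mk {A : Type} [AddCommGroup A] (a b : A) : Lambda2 A :=
  QuotientAddGroup.mk (a ⊗ₜ[ℤ] b)

namespace Lambda2

variable {A B C : Type} [AddCommGroup A] [AddCommGroup B] [AddCommGroup C]

/-- the quotient hom -/
def mkHom : TensorProduct ℤ A A →+ Lambda2 A := QuotientAddGroup.mk' (Lambda2Rels A)

lemma mk_def (a b : A) : Lambda2.mk a b = mkHom (a ⊗ₜ[ℤ] b) := rfl

lemma mk_add_left (a a' b : A) : Lambda2.mk (a + a') b = Lambda2.mk a b + Lambda2.mk a' b := by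
  simp [mk_def, TensorProduct.add_tmul, map_add]

lemma mk_add_right (a b b' : A) : Lambda2.mk a (b + b') = Lambda2.mk a b + Lambda2.mk a b' := by
  simp [mk_def, TensorProduct.tmul_add, map_add]

lemma mk_self (a : A) : Lambda2.mk a a = 0 := by
  exact (QuotientAddGroup.eq_zero_iff _).mpr (AddSubgroup.subset_closure ⟨a, rfl⟩)

lemma mk_antisymm (a b : A) : Lambda2.mk a b = - Lambda2.mk b a := by
  have h := mk_self (a + b)
  rw [mk_add_left, mk_add_right, mk_add_right, mk_self, mk_self] at h
  rw [eq_neg_iff_add_eq_zero]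
  rw [zero_add, add_zero] at h
  exact h

end Lambda2

namespace Lambda2

variable {A B C : Type} [AddCommGroup A] [AddCommGroup B] [AddCommGroup C]

/-- lift a biadditive map vanishing on the diagonal to the exterior square -/
def lift (φ : A →+ A →+ C) (h : ∀ a, φ a a = 0) : Lambda2 A →+ C :=
  QuotientAddGroup.lift (Lambda2Rels A)
    (TensorProduct.lift (LinearMap.mk₂ ℤ (fun a b => φ a b)
      (fun a a' b => by simp) (fun r a b => by simp)
      (fun a b b' => by simp) (fun r a b => by simp))).toAddMonoidHom
    (by
      intro x hx
      induction hx using AddSubgroup.closure_induction with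
      | mem x hx => obtain ⟨a, rfl⟩ := hx; simpa using h a
      | zero => simp
      | add x y _ _ hx hy =>
          rw [AddMonoidHom.mem_ker] at hx hy ⊢
          simp only [LinearMap.toAddMonoidHom_coe] at hx hy ⊢
          rw [map_add, hx, hy, add_zero]
      | neg x _ hx =>
          rw [AddMonoidHom.mem_ker] at hx ⊢
          simp only [LinearMap.toAddMonoidHom_coe] at hx ⊢
          rw [map_neg, hx, neg_zero])

@[simp] lemma lift_mk (φ : A →+ A →+ C) (h : ∀ a, φ a a = 0) (a b : A) :
    lift φ h (Lambda2.mk a b) = φ a b := rfl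

/-- `mk` bundled as a biadditive map -/
def mkBi : A →+ A →+ Lambda2 A :=
  AddMonoidHom.mk' (fun a => AddMonoidHom.mk' (fun b => Lambda2.mk a b) (mk_add_right a))
    (fun a a' => AddMonoidHom.ext (fun b => mk_add_left a a' b))

@[simp] lemma mkBi_apply (a b : A) : mkBi a b = Lambda2.mk a b := rfl

/-- functoriality -/
def map (f : A →+ B) : Lambda2 A →+ Lambda2 B :=
  lift (AddMonoidHom.mk' (fun a => (AddMonoidHom.mk' (fun b => Lambda2.mk (f a) b)
      (mk_add_right (f a))).comp f)
      (fun a a' => AddMonoidHom.ext (fun b => by simp [map_add, mk_add_left])))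
    (fun a => mk_self (f a))

@[simp] lemma map_mk (f : A →+ B) (a b : A) :
    map f (Lambda2.mk a b) = Lambda2.mk (f a) (f b) := rfl

lemma hom_ext {f g : Lambda2 A →+ C} (h : ∀ a b, f (Lambda2.mk a b) = g (Lambda2.mk a b)) :
    f = g := by
  ext x
  obtain ⟨y, rfl⟩ := QuotientAddGroup.mk_surjective x
  induction y using TensorProduct.induction_on with
  | zero => exact (map_zero f).trans (map_zero g).symm
  | tmul a b => exact h a b
  | add x y hx hy =>
    exact (map_add f (mkHom x) (mkHom y)).trans ((congrArg₂ (· + ·) hx hy).trans (map_add g _ _).symm)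

end Lambda2

namespace Lambda2

variable {A B C : Type} [AddCommGroup A] [AddCommGroup B] [AddCommGroup C]

lemma mk_zsmul_left (r : ℤ) (a b : A) : Lambda2.mk (r • a) b = r • Lambda2.mk a b :=
  map_zsmul (AddMonoidHom.mk' (fun a : A => Lambda2.mk a b) (fun a a' => mk_add_left a a' b)) r a

lemma mk_zsmul_right (r : ℤ) (a b : A) : Lambda2.mk a (r • b) = r • Lambda2.mk a b :=
  map_zsmul (mkBi a) r b

/-- `mk` as a ℤ-bilinear map. -/
def mkLin : A →ₗ[ℤ] A →ₗ[ℤ] Lambda2 A :=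
  LinearMap.mk₂ ℤ Lambda2.mk mk_add_left mk_zsmul_left mk_add_right mk_zsmul_right

@[simp] lemma mkLin_apply (a b : A) : mkLin a b = Lambda2.mk a b := rfl

/-- a bilinear "half" of `mk`: `β a b - β b a = mk a b`. -/
theorem exists_beta {ι : Type} [LinearOrder ι] (b : Module.Basis ι ℤ A) :
    ∃ β : A →ₗ[ℤ] A →ₗ[ℤ] Lambda2 A, ∀ a c : A, β a c - β c a = Lambda2.mk a c := by
  classical
  refine ⟨b.constr ℤ (fun i => b.constr ℤ (fun j => if j < i then Lambda2.mk (b i) (b j) else 0)),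
    ?_⟩
  set β := b.constr ℤ (fun i => b.constr ℤ (fun j => if j < i then Lambda2.mk (b i) (b j) else 0))
    with hβ
  have key : (LinearMap.mk₂ ℤ (fun a c => β a c - β c a)
      (fun a a' c => by simp [map_add]; abel)
      (fun r a c => by simp [map_smul]; rw [smul_sub])
      (fun a c c' => by simp [map_add]; abel)
      (fun r a c => by simp [map_smul]; rw [smul_sub]))
      = (mkLin : A →ₗ[ℤ] A →ₗ[ℤ] Lambda2 A) := by
    apply b.ext; intro i
    apply b.ext; intro j
    simp only [LinearMap.mk₂_apply, mkLin_apply, hβ, Module.Basis.constr_basis]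
    rcases lt_trichotomy i j with h | h | h
    · rw [if_neg (by exact lt_asymm h), if_pos h, zero_sub, mk_antisymm (b i) (b j)]
    · subst h; rw [if_neg (lt_irrefl i), sub_zero, mk_self]
    · rw [if_pos h, if_neg (by exact lt_asymm h), sub_zero]
  intro a c
  exact LinearMap.congr_fun (LinearMap.congr_fun key a) c

/-- functoriality on isomorphisms -/
def congr (f : A ≃+ B) : Lambda2 A ≃+ Lambda2 B where
  toFun := map f.toAddMonoidHom
  invFun := map f.symm.toAddMonoidHom
  left_inv := by
    intro x
    have : (map f.symm.toAddMonoidHom).comp (map f.toAddMonoidHom)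
        = AddMonoidHom.id (Lambda2 A) := hom_ext (fun a b => by simp)
    exact DFunLike.congr_fun this x
  right_inv := by
    intro x
    have : (map f.toAddMonoidHom).comp (map f.symm.toAddMonoidHom)
        = AddMonoidHom.id (Lambda2 B) := hom_ext (fun a b => by simp)
    exact DFunLike.congr_fun this x
  map_add' := map_add _

@[simp] lemma congr_mk (f : A ≃+ B) (a b : A) :
    congr f (Lambda2.mk a b) = Lambda2.mk (f a) (f b) := rfl

end Lambda2

/-! ### commutators in a group of nilpotency class 2 -/

section Qel

variable {G : Type} [Group G]

/-- the commutator `x⁻¹y⁻¹xy`. -/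
def qel (x y : G) : G := x⁻¹ * y⁻¹ * x * y

lemma qel_mem_commutator (x y : G) : qel x y ∈ commutator G := by
  have : qel x y = ⁅x⁻¹, y⁻¹⁆ := by simp [qel, commutatorElement_def]
  rw [this, commutator_def]
  exact Subgroup.commutator_mem_commutator (Subgroup.mem_top _) (Subgroup.mem_top _)

variable (hc : commutator G ≤ Subgroup.center G)
include hc

lemma qel_central (x y g : G) : g * qel x y = qel x y * g :=
  (Subgroup.mem_center_iff.mp (hc (qel_mem_commutator x y)) g)

lemma qel_mul_left (x x' y : G) : qel (x * x') y = qel x y * qel x' y := by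
  calc qel (x * x') y = (x'⁻¹ * qel x y) * (y⁻¹ * x' * y) := by simp only [qel]; group
    _ = (qel x y * x'⁻¹) * (y⁻¹ * x' * y) := by rw [qel_central hc]
    _ = qel x y * qel x' y := by simp only [qel]; group

lemma qel_mul_right (x y y' : G) : qel x (y * y') = qel x y * qel x y' := by
  calc qel x (y * y') = (x⁻¹ * y'⁻¹ * x) * (qel x y * y') := by simp only [qel]; group
    _ = (x⁻¹ * y'⁻¹ * x) * (y' * qel x y) := by rw [← qel_central hc]
    _ = qel x y' * qel x y := by simp only [qel]; group
    _ = qel x y * qel x y' := by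
        rw [qel_central hc]

omit hc in
lemma qel_self (x : G) : qel x x = 1 := by simp [qel]

end Qel

/-! ### the model group `A × Λ²A` with multiplication twisted by `β` -/

structure N2 {A : Type} [AddCommGroup A] (β : A →ₗ[ℤ] A →ₗ[ℤ] Lambda2 A) : Type where
  fst : A
  snd : Lambda2 A

namespace N2

variable {A : Type} [AddCommGroup A] {β : A →ₗ[ℤ] A →ₗ[ℤ] Lambda2 A}

@[ext] lemma ext {x y : N2 β} (h1 : x.fst = y.fst) (h2 : x.snd = y.snd) : x = y := by
  cases x; cases y; cases h1; cases h2; rfl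

instance : Group (N2 β) where
  mul x y := ⟨x.fst + y.fst, x.snd + y.snd + β x.fst y.fst⟩
  one := ⟨0, 0⟩
  inv x := ⟨-x.fst, -x.snd + β x.fst x.fst⟩
  mul_assoc x y z := by
    refine N2.ext ?_ ?_
    · show x.fst + y.fst + z.fst = x.fst + (y.fst + z.fst)
      rw [add_assoc]
    · show x.snd + y.snd + β x.fst y.fst + z.snd + β (x.fst + y.fst) z.fst
        = x.snd + (y.snd + z.snd + β y.fst z.fst) + β x.fst (y.fst + z.fst)
      simp only [map_add, LinearMap.add_apply]
      abel
  one_mul x := by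
    refine N2.ext ?_ ?_
    · show 0 + x.fst = x.fst
      rw [zero_add]
    · show 0 + x.snd + β 0 x.fst = x.snd
      simp
  mul_one x := by
    refine N2.ext ?_ ?_
    · show x.fst + 0 = x.fst
      rw [add_zero]
    · show x.snd + 0 + β x.fst 0 = x.snd
      simp
  inv_mul_cancel x := by
    refine N2.ext ?_ ?_
    · show -x.fst + x.fst = 0
      rw [neg_add_cancel]
    · show (-x.snd + β x.fst x.fst) + x.snd + β (-x.fst) x.fst = 0
      simp only [map_neg, LinearMap.neg_apply]
      abel

lemma mul_def (x y : N2 β) : x * y = ⟨x.fst + y.fst, x.snd + y.snd + β x.fst y.fst⟩ := rfl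
lemma inv_def (x : N2 β) : x⁻¹ = ⟨-x.fst, -x.snd + β x.fst x.fst⟩ := rfl
lemma one_def : (1 : N2 β) = ⟨0, 0⟩ := rfl

lemma qel_eq (x y : N2 β) : qel x y = ⟨0, β x.fst y.fst - β y.fst x.fst⟩ := by
  refine N2.ext ?_ ?_
  · show -x.fst + -y.fst + x.fst + y.fst = 0
    abel
  · show ((-x.snd + β x.fst x.fst) + (-y.snd + β y.fst y.fst) + β (-x.fst) (-y.fst)) + x.snd
        + β (-x.fst + -y.fst) x.fst + y.snd + β (-x.fst + -y.fst + x.fst) y.fst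
      = β x.fst y.fst - β y.fst x.fst
    simp only [map_add, map_neg, LinearMap.add_apply, LinearMap.neg_apply, neg_neg]
    abel

lemma central_of_fst_eq_zero {z : N2 β} (hz : z.fst = 0) : z ∈ Subgroup.center (N2 β) := by
  rw [Subgroup.mem_center_iff]
  intro g
  refine N2.ext ?_ ?_
  · show g.fst + z.fst = z.fst + g.fst
    rw [add_comm]
  · show g.snd + z.snd + β g.fst z.fst = z.snd + g.snd + β z.fst g.fst
    rw [hz]
    simp [add_comm]

lemma commutator_le_center : commutator (N2 β) ≤ Subgroup.center (N2 β) := by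
  rw [commutator_def, Subgroup.commutator_le]
  intro g₁ _ g₂ _
  apply central_of_fst_eq_zero
  have : ⁅g₁, g₂⁆ = qel g₁⁻¹ g₂⁻¹ := by simp [qel, commutatorElement_def]
  rw [this, qel_eq]

lemma lcs2_eq_bot : (⊤ : Subgroup (N2 β)).lowerCentralSeries 2 = ⊥ := by
  show ⁅(⊤ : Subgroup (N2 β)).lowerCentralSeries 1, ⊤⁆ = ⊥
  rw [Subgroup.commutator_eq_bot_iff_le_centralizer, Subgroup.top_lowerCentralSeries_one]
  calc commutator (N2 β) ≤ Subgroup.center (N2 β) := commutator_le_center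
    _ = Subgroup.centralizer ((⊤ : Subgroup (N2 β)) : Set (N2 β)) := by
        rw [Subgroup.coe_top, Subgroup.centralizer_univ]

/-- first projection as a monoid hom -/
def fstHom : N2 β →* Multiplicative A where
  toFun x := Multiplicative.ofAdd x.fst
  map_one' := rfl
  map_mul' x y := rfl

end N2

/-! ### abelianization of a quotient by a subgroup of the commutator subgroup -/

section AbQuot

variable {F : Type} [Group F] (N : Subgroup F) [N.Normal] (hN : N ≤ commutator F)

/-- abelianization is unchanged by quotienting by a subgroup of commutators -/
def abQuotEquiv : Abelianization F ≃* Abelianization (F ⧸ N) := by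
  refine MonoidHom.toMulEquiv (Abelianization.map (QuotientGroup.mk' N))
    (Abelianization.lift (QuotientGroup.lift N (Abelianization.of)
      (fun x hx => (MonoidHom.mem_ker).mp
        (Abelianization.commutator_subset_ker Abelianization.of (hN hx))))) ?_ ?_
  · apply Abelianization.hom_ext
    ext x
    simp [Abelianization.map_of]
    rfl
  · apply Abelianization.hom_ext
    apply QuotientGroup.monoidHom_ext
    ext x
    simp [Abelianization.map_of]
    rfl

end AbQuot

/-! ### the commutator pairing -/

section Forward

variable {G : Type} [Group G] (hc : commutator G ≤ Subgroup.center G)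

include hc in
theorem commutator_isCommutative' : IsMulCommutative ↥(commutator G) :=
  ⟨⟨fun a b => Subtype.ext (Subgroup.mem_center_iff.mp (hc b.2) a)⟩⟩

lemma ab_of_surjective : Function.Surjective (Abelianization.of : G →* Abelianization G) := by
  intro b
  obtain ⟨x, hx⟩ := Quot.exists_rep b
  exact ⟨x, hx ▸ (Abelianization.mk_eq_of x).symm⟩

variable [h : IsMulCommutative ↥(commutator G)]

/-- the commutator pairing as a hom into the commutator subgroup -/
def qhom : G →* (G →* ↥(commutator G)) :=
  MonoidHom.mk' (fun x => MonoidHom.mk'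
      (fun y => (⟨qel x y, qel_mem_commutator x y⟩ : ↥(commutator G)))
      (fun y y' => Subtype.ext (qel_mul_right hc x y y')))
    (fun x x' => MonoidHom.ext (fun y => Subtype.ext (qel_mul_left hc x x' y)))

/-- the commutator pairing factored through the abelianization -/
def qab : Abelianization G →* (Abelianization G →* ↥(commutator G)) :=
  Abelianization.lift (MonoidHom.mk' (fun x => Abelianization.lift (qhom hc x))
    (fun x x' => Abelianization.hom_ext _ _ (MonoidHom.ext (fun y => by
      simp [Abelianization.lift_apply_of, map_mul]))))

@[simp] lemma qab_of (x y : G) :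
    qab hc (Abelianization.of x) (Abelianization.of y)
      = (⟨qel x y, qel_mem_commutator x y⟩ : ↥(commutator G)) := rfl

/-- the induced hom on the exterior square -/
def wQ : Lambda2 (Additive (Abelianization G)) →+ Additive ↥(commutator G) :=
  Lambda2.lift
    (AddMonoidHom.mk' (fun a => AddMonoidHom.mk'
        (fun b => Additive.ofMul (qab hc (Additive.toMul a) (Additive.toMul b)))
        (fun b b' => congrArg Additive.ofMul (map_mul (qab hc (Additive.toMul a)) _ _)))
      (fun a a' => AddMonoidHom.ext (fun b => congrArg Additive.ofMul
        (by rw [toMul_add, map_mul]; rfl))))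
    (fun a => by
      obtain ⟨x, hx⟩ := ab_of_surjective (Additive.toMul a)
      have : qab hc (Additive.toMul a) (Additive.toMul a) = 1 := by
        rw [← hx, qab_of]
        exact Subtype.ext (qel_self x)
      simpa using congrArg Additive.ofMul this)

@[simp] lemma wQ_mk (x y : G) :
    wQ hc (Lambda2.mk (Additive.ofMul (Abelianization.of x)) (Additive.ofMul (Abelianization.of y)))
      = Additive.ofMul (⟨qel x y, qel_mem_commutator x y⟩ : ↥(commutator G)) := rfl

end Forward


/-- Let `F` be a free group on a set `E`, `G = F/γ₃(F)` its 2-nilpotent quotient,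
`A = G^{ab} (≅ F^{ab})` its abelianization and `p : G → A` the quotient map.  Then
(i) `ker p = γ₂(F)/γ₃(F)` and `ker p` is contained in the center of `G`, and
(ii) there is an isomorphism of abelian groups `w : Λ²A ≅ ker p` with
`w (p x ∧ p y) = x⁻¹y⁻¹xy` for all `x y : G`; in particular there is a central
extension `Λ²A ↣ G ↠ A` and the commutator map induces an isomorphism
`Λ²(F^{ab}) ≅ γ₂(F)/γ₃(F)`. -/
theorem free_nil2_central_extension (E : Type) :
    let F := FreeGroup E
    let G := F ⧸ (⊤ : Subgroup F).lowerCentralSeries 2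
    let p : G →* Abelianization G := Abelianization.of
    -- (i)
    (MonoidHom.ker p =
        Subgroup.map (QuotientGroup.mk' ((⊤ : Subgroup F).lowerCentralSeries 2)) ((⊤ : Subgroup F).lowerCentralSeries 1)) ∧
    (MonoidHom.ker p ≤ Subgroup.center G) ∧
    -- (ii)
    (∃ w : Lambda2 (Additive (Abelianization G)) ≃+ Additive (MonoidHom.ker p),
      ∀ x y : G,
        ((Additive.toMul
            (w (Lambda2.mk (Additive.ofMul (p x)) (Additive.ofMul (p y)))) : MonoidHom.ker p) : G)
          = x⁻¹ * y⁻¹ * x * y) ∧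
    -- in particular, the commutator map induces `Λ²(F^{ab}) ≅ γ₂(F)/γ₃(F)`
    Nonempty (Lambda2 (Additive (Abelianization F)) ≃+
      Additive (((⊤ : Subgroup F).lowerCentralSeries 1) ⧸
        (((⊤ : Subgroup F).lowerCentralSeries 2).subgroupOf ((⊤ : Subgroup F).lowerCentralSeries 1)))) := by
  intro F G p
  -- basic structure of `G`
  have hsur : Function.Surjective (QuotientGroup.mk' ((⊤ : Subgroup F).lowerCentralSeries 2)) :=
    QuotientGroup.mk'_surjective _
  have hl2 : (⊤ : Subgroup G).lowerCentralSeries 2 = ⊥ := by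
    have hmap : Subgroup.map (QuotientGroup.mk' ((⊤ : Subgroup F).lowerCentralSeries 2))
        ((⊤ : Subgroup F).lowerCentralSeries 2) = (⊤ : Subgroup G).lowerCentralSeries 2 := by
      show Subgroup.map _ ⁅⁅(⊤ : Subgroup F), ⊤⁆, ⊤⁆ = ⁅⁅(⊤ : Subgroup G), ⊤⁆, ⊤⁆
      rw [Subgroup.map_commutator, Subgroup.map_commutator,
        Subgroup.map_top_of_surjective _ hsur]
    rw [← hmap, Subgroup.map_eq_bot_iff, QuotientGroup.ker_mk']
  have hcent : commutator G ≤ Subgroup.center G := by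
    have h1 : ⁅commutator G, (⊤ : Subgroup G)⁆ = ⊥ := hl2
    rw [Subgroup.commutator_eq_bot_iff_le_centralizer] at h1
    rwa [Subgroup.coe_top, Subgroup.centralizer_univ] at h1
  have hker : MonoidHom.ker p = commutator G :=
    Subgroup.ext fun x => QuotientGroup.eq_one_iff x
  have hfirst : MonoidHom.ker p =
      Subgroup.map (QuotientGroup.mk' ((⊤ : Subgroup F).lowerCentralSeries 2)) ((⊤ : Subgroup F).lowerCentralSeries 1) := by
    rw [hker]
    show ⁅(⊤ : Subgroup G), ⊤⁆ = Subgroup.map _ ⁅(⊤ : Subgroup F), ⊤⁆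
    rw [Subgroup.map_commutator, Subgroup.map_top_of_surjective _ hsur]
  have hW : ∃ w : Lambda2 (Additive (Abelianization G)) ≃+ Additive (MonoidHom.ker p),
      ∀ x y : G,
        ((Additive.toMul
            (w (Lambda2.mk (Additive.ofMul (p x)) (Additive.ofMul (p y)))) : MonoidHom.ker p) : G)
          = x⁻¹ * y⁻¹ * x * y := by
    haveI hcomm : IsMulCommutative ↥(commutator G) := commutator_isCommutative' hcent
    -- a basis of the abelianization
    have hN : (⊤ : Subgroup F).lowerCentralSeries 2 ≤ commutator F :=
      (Subgroup.lowerCentralSeries_antitone ⊤) (by norm_num : (1 : ℕ) ≤ 2)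
    let eGF : Abelianization F ≃* Abelianization G := abQuotEquiv ((⊤ : Subgroup F).lowerCentralSeries 2) hN
    let eAdd : Additive (Abelianization F) ≃+ Additive (Abelianization G) :=
      MulEquiv.toAdditive eGF
    letI : LinearOrder E := IsWellOrder.linearOrder WellOrderingRel
    let basisA : Module.Basis E ℤ (Additive (Abelianization G)) :=
      (FreeAbelianGroup.basis E).map eAdd.toIntLinearEquiv
    obtain ⟨β, hβ⟩ := Lambda2.exists_beta basisA
    -- the model group and the comparison hom
    let ι : E → N2 β := fun e =>
      ⟨Additive.ofMul (p (QuotientGroup.mk (FreeGroup.of e))), 0⟩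
    let hF : F →* N2 β := FreeGroup.lift ι
    have hFN : (⊤ : Subgroup F).lowerCentralSeries 2 ≤ hF.ker := by
      rw [← Subgroup.map_eq_bot_iff]
      have hmono : Subgroup.map hF ((⊤ : Subgroup F).lowerCentralSeries 2)
          ≤ (⊤ : Subgroup (N2 β)).lowerCentralSeries 2 := by
        show Subgroup.map hF ⁅⁅(⊤ : Subgroup F), ⊤⁆, ⊤⁆ ≤ ⁅⁅(⊤ : Subgroup (N2 β)), ⊤⁆, ⊤⁆
        rw [Subgroup.map_commutator, Subgroup.map_commutator]
        exact Subgroup.commutator_mono (Subgroup.commutator_mono le_top le_top) le_top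
      exact le_bot_iff.mp (hmono.trans_eq N2.lcs2_eq_bot)
    let h : G →* N2 β := QuotientGroup.lift ((⊤ : Subgroup F).lowerCentralSeries 2) hF
      (fun x hx => (MonoidHom.mem_ker).mp (hFN hx))
    have fst_h : ∀ x : G, (h x).fst = Additive.ofMul (p x) := by
      have key : N2.fstHom.comp h =
          ((MulEquiv.multiplicativeAdditive (Abelianization G)).symm.toMonoidHom).comp p := by
        apply QuotientGroup.monoidHom_ext
        apply FreeGroup.ext_hom
        intro e
        show N2.fstHom (h ((QuotientGroup.mk' ((⊤ : Subgroup F).lowerCentralSeries 2)) (FreeGroup.of e))) = _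
        rw [show h ((QuotientGroup.mk' ((⊤ : Subgroup F).lowerCentralSeries 2)) (FreeGroup.of e))
          = hF (FreeGroup.of e) from QuotientGroup.lift_mk' _ _ _]
        rw [show hF (FreeGroup.of e) = ι e from FreeGroup.lift_apply_of]
        rfl
      intro x
      exact congrArg Multiplicative.toAdd (DFunLike.congr_fun key x)
    -- `h` preserves the commutator word
    have h_qel : ∀ x y : G, h (qel x y) = qel (h x) (h y) := by
      intro x y
      simp [qel, map_mul, map_inv]
    -- the backward map
    have hker' : ∀ k : ↥(MonoidHom.ker p), (h (k : G)).fst = 0 := by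
      intro k
      rw [fst_h]
      have : p (k : G) = 1 := k.2
      rw [this]
      rfl
    let v : Additive ↥(MonoidHom.ker p) →+ Lambda2 (Additive (Abelianization G)) :=
      AddMonoidHom.mk' (fun k => (h ((Additive.toMul k : ↥(MonoidHom.ker p)) : G)).snd)
        (by
          intro k k'
          show (h (((Additive.toMul k * Additive.toMul k' : ↥(MonoidHom.ker p))) : G)).snd = _
          rw [Subgroup.coe_mul, map_mul, N2.mul_def]
          show _ + _ + β _ _ = _
          rw [hker' (Additive.toMul k), map_zero, LinearMap.zero_apply, add_zero])
    -- the forward map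
    let wfinal : Lambda2 (Additive (Abelianization G)) →+ Additive ↥(MonoidHom.ker p) :=
      (MulEquiv.toAdditive (MulEquiv.subgroupCongr hker.symm)).toAddMonoidHom.comp (wQ hcent)
    have wf_mk : ∀ x y : G,
        wfinal (Lambda2.mk (Additive.ofMul (p x)) (Additive.ofMul (p y)))
          = Additive.ofMul (⟨qel x y, hker ▸ qel_mem_commutator x y⟩ : ↥(MonoidHom.ker p)) := by
      intro x y
      rfl
    -- `v` is a left inverse of `wfinal`
    have hvw : ∀ s, v (wfinal s) = s := by
      have : v.comp wfinal = AddMonoidHom.id _ := by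
        apply Lambda2.hom_ext
        intro a b
        obtain ⟨x, hx⟩ := ab_of_surjective (Additive.toMul a)
        obtain ⟨y, hy⟩ := ab_of_surjective (Additive.toMul b)
        have ha : a = Additive.ofMul (p x) := by
          rw [show p x = Additive.toMul a from hx]; rfl
        have hb : b = Additive.ofMul (p y) := by
          rw [show p y = Additive.toMul b from hy]; rfl
        rw [ha, hb]
        show v (wfinal _) = _
        rw [wf_mk]
        show (h (qel x y)).snd = _
        rw [h_qel, N2.qel_eq]
        show β (h x).fst (h y).fst - β (h y).fst (h x).fst = _
        rw [fst_h, fst_h, hβ]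
        rfl
      intro s
      exact DFunLike.congr_fun this s
    have hinj : Function.Injective wfinal := by
      intro s t hst
      rw [← hvw s, ← hvw t, hst]
    have hsurj : Function.Surjective wfinal := by
      have main : ∀ x (hx : x ∈ MonoidHom.ker p),
          ∃ s, wfinal s = Additive.ofMul (⟨x, hx⟩ : ↥(MonoidHom.ker p)) := by
        intro x hx
        have hx' : x ∈ Subgroup.closure (commutatorSet G) := by
          rwa [← commutator_eq_closure, ← hker]
        revert hx
        induction hx' using Subgroup.closure_induction with
        | mem g hg =>
            intro hx
            obtain ⟨g₁, g₂, rfl⟩ := hg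
            refine ⟨Lambda2.mk (Additive.ofMul (p g₁⁻¹)) (Additive.ofMul (p g₂⁻¹)), ?_⟩
            rw [wf_mk]
            congr 1
            exact Subtype.ext (by simp [qel, commutatorElement_def]; exact congrArg₂ (· * ·) (inv_inv g₁) (inv_inv g₂))
        | one =>
            intro hx
            exact ⟨0, by rw [map_zero]; exact congrArg Additive.ofMul (Subtype.ext rfl).symm⟩
        | mul g g' hg hg' ihg ihg' =>
            intro hx
            obtain ⟨s, hs⟩ := ihg (by rwa [hker, commutator_eq_closure])
            obtain ⟨t, ht⟩ := ihg' (by rwa [hker, commutator_eq_closure])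
            refine ⟨s + t, ?_⟩
            rw [map_add, hs, ht]
            rfl
        | inv g hg ihg =>
            intro hx
            obtain ⟨s, hs⟩ := ihg (by rwa [hker, commutator_eq_closure])
            refine ⟨-s, ?_⟩
            rw [map_neg, hs]
            rfl
      intro k
      obtain ⟨s, hs⟩ := main ((Additive.toMul k : ↥(MonoidHom.ker p)) : G)
        (Additive.toMul k : ↥(MonoidHom.ker p)).2
      exact ⟨s, hs⟩
    refine ⟨AddEquiv.ofBijective wfinal ⟨hinj, hsurj⟩, ?_⟩
    intro x y
    show ((Additive.toMul (wfinal (Lambda2.mk (Additive.ofMul (p x)) (Additive.ofMul (p y)))) :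
        ↥(MonoidHom.ker p)) : G) = x⁻¹ * y⁻¹ * x * y
    rw [wf_mk]
    rfl
  refine ⟨hfirst, hker ▸ hcent, hW, ?_⟩
  obtain ⟨w, -⟩ := hW
  have hN : (⊤ : Subgroup F).lowerCentralSeries 2 ≤ commutator F :=
    (Subgroup.lowerCentralSeries_antitone ⊤) (by norm_num : (1 : ℕ) ≤ 2)
  let eGF : Abelianization F ≃* Abelianization G := abQuotEquiv ((⊤ : Subgroup F).lowerCentralSeries 2) hN
  let eAdd : Additive (Abelianization F) ≃+ Additive (Abelianization G) :=
    MulEquiv.toAdditive eGF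
  let φ : ↥((⊤ : Subgroup F).lowerCentralSeries 1) →* G :=
    (QuotientGroup.mk' ((⊤ : Subgroup F).lowerCentralSeries 2)).comp (Subgroup.subtype ((⊤ : Subgroup F).lowerCentralSeries 1))
  have eq_range : φ.range
      = Subgroup.map (QuotientGroup.mk' ((⊤ : Subgroup F).lowerCentralSeries 2)) ((⊤ : Subgroup F).lowerCentralSeries 1) := by
    rw [MonoidHom.range_comp, Subgroup.range_subtype]
  have eq_ker : φ.ker = ((⊤ : Subgroup F).lowerCentralSeries 2).subgroupOf ((⊤ : Subgroup F).lowerCentralSeries 1) := by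
    rw [← MonoidHom.comap_ker, QuotientGroup.ker_mk']
    rfl
  let e5 : (↥((⊤ : Subgroup F).lowerCentralSeries 1) ⧸
        ((⊤ : Subgroup F).lowerCentralSeries 2).subgroupOf ((⊤ : Subgroup F).lowerCentralSeries 1)) ≃* ↥(φ.range) :=
    (QuotientGroup.quotientMulEquivOfEq eq_ker.symm).trans
      (QuotientGroup.quotientKerEquivRange φ)
  have eq_total : MonoidHom.ker p = φ.range := hfirst.trans eq_range.symm
  let eK : ↥(MonoidHom.ker p) ≃* ↥(φ.range) := MulEquiv.subgroupCongr eq_total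
  exact ⟨(Lambda2.congr eAdd).trans (w.trans (MulEquiv.toAdditive (eK.trans e5.symm)))⟩

end
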